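/- Let p₀ ∈ C^∞(ℝ^{2n}) satisfy p₀(0) = 0, dp₀(0) = 0, p₀(X) = q(X) + O(|X|³) as X → 0 with q a quadratic form, and suppose the flows e^{tH_{Im p₀}} and e^{tH_{Im q}} satisfy |e^{tH_{Im p₀}}X| ≤ e^{Ct}|X| and |e^{tH_{Im p₀}}X − e^{tH_{Im q}}X| ≤ c̃ t|X|² for 0 ≤ t ≤ T. Then for each fixed T > 0, the time averages satisfy ⟨Re p₀⟩_{T,Im p₀}(X) = ⟨Re q⟩_{T,Im q}(X) + O(|X|³) as X → 0, where ⟨f⟩_{T,b}(X) = (1/T)∫₀^T f(e^{tH_b}X) dt. -/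
import Mathlib


open MeasureTheory

/-- Let `Rp = Re p₀` with `p₀(0) = 0`, `dp₀(0) = 0`, and `Rp(X) = Rq(X) + O(|X|³)` as
`X → 0`, `Rq = Re q` a quadratic form (with the polar bound
`|Rq X − Rq Y| ≤ C₂(|X|+|Y|)|X−Y|`).  Suppose the flows `φ = e^{tH_{Im p₀}}` and
`ψ = e^{tH_{Im q}}` satisfy `|φ_t X| ≤ e^{Ct}|X|` and `|φ_t X − ψ_t X| ≤ c̃ t |X|²` on
`[0,T]`.  Then `⟨Rp⟩_{T,Im p₀}(X) = ⟨Rq⟩_{T,Im q}(X) + O(|X|³)` as `X → 0`, where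
`⟨f⟩(X) = (1/T)∫₀^T f(flow_t X) dt`. -/
theorem stmt_12 (n : ℕ) (T C ctilde C₁ C₂ r : ℝ) (hT : 0 < T) (hr : 0 < r)
    (Rp Rq : EuclideanSpace ℝ (Fin (2 * n)) → ℝ)
    (φ ψ : ℝ → EuclideanSpace ℝ (Fin (2 * n)) → EuclideanSpace ℝ (Fin (2 * n)))
    (hRpcont : Continuous Rp)
    (hφcont : ∀ X, ContinuousOn (fun t => φ t X) (Set.Icc 0 T))
    (hψcont : ∀ X, ContinuousOn (fun t => ψ t X) (Set.Icc 0 T))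
    (hlip : ∀ X Y, |Rq X - Rq Y| ≤ C₂ * (‖X‖ + ‖Y‖) * ‖X - Y‖)
    (htaylor : ∀ X, ‖X‖ ≤ r → |Rp X - Rq X| ≤ C₁ * ‖X‖ ^ 3)
    (hφbd : ∀ t ∈ Set.Icc (0:ℝ) T, ∀ X, ‖φ t X‖ ≤ Real.exp (C * t) * ‖X‖)
    (hdiff : ∀ t ∈ Set.Icc (0:ℝ) T, ∀ X, ‖φ t X - ψ t X‖ ≤ ctilde * t * ‖X‖ ^ 2) :
    ∃ K > 0, ∃ r' > 0, ∀ X, ‖X‖ ≤ r' →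
      |(1 / T) * (∫ t in (0:ℝ)..T, Rp (φ t X)) - (1 / T) * ∫ t in (0:ℝ)..T, Rq (ψ t X)|
        ≤ K * ‖X‖ ^ 3 := by
  -- Rq is continuous
  have hRqcont : Continuous Rq := by
    rw [continuous_iff_continuousAt]
    intro X
    have h0 : Filter.Tendsto (fun Y => |Rq Y - Rq X|) (nhds X) (nhds 0) := by
      apply squeeze_zero (fun Y => abs_nonneg _)
        (fun Y => (hlip Y X).trans (le_abs_self _))
      have : Filter.Tendsto (fun Y => |C₂ * (‖Y‖ + ‖X‖) * ‖Y - X‖|) (nhds X)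
          (nhds |C₂ * (‖X‖ + ‖X‖) * ‖X - X‖|) := by
        apply Filter.Tendsto.abs
        exact (Filter.Tendsto.mul (tendsto_const_nhds.mul
          ((continuous_norm.tendsto X).add tendsto_const_nhds))
          ((continuous_id.sub continuous_const).norm.tendsto X))
      simpa using this
    have := (tendsto_iff_norm_sub_tendsto_zero (f := Rq) (a := nhds X) (b := Rq X)).2
      (by simpa [Real.norm_eq_abs] using h0)
    exact this
  set M : ℝ := Real.exp (|C| * T) with hM
  have hM1 : 1 ≤ M := Real.one_le_exp (by positivity)
  have hM0 : 0 < M := lt_of_lt_of_le one_pos hM1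
  set D : ℝ := |C₁| * M ^ 3 + |C₂| * (2 * M + |ctilde| * T) * (|ctilde| * T) with hD
  have hD0 : 0 ≤ D := by positivity
  refine ⟨D + 1, by positivity, min 1 (r / M), lt_min one_pos (by positivity), ?_⟩
  intro X hX
  have hX1 : ‖X‖ ≤ 1 := hX.trans (min_le_left _ _)
  have hXrM : ‖X‖ ≤ r / M := hX.trans (min_le_right _ _)
  -- bounds on φ and ψ
  have hφM : ∀ t ∈ Set.Icc (0:ℝ) T, ‖φ t X‖ ≤ M * ‖X‖ := by
    intro t ht
    refine (hφbd t ht X).trans (mul_le_mul_of_nonneg_right ?_ (norm_nonneg _))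
    exact Real.exp_le_exp.2 (by
      calc C * t ≤ |C| * t := mul_le_mul_of_nonneg_right (le_abs_self C) ht.1
        _ ≤ |C| * T := mul_le_mul_of_nonneg_left ht.2 (abs_nonneg C))
  have hφr : ∀ t ∈ Set.Icc (0:ℝ) T, ‖φ t X‖ ≤ r := by
    intro t ht
    calc ‖φ t X‖ ≤ M * ‖X‖ := hφM t ht
      _ ≤ M * (r / M) := mul_le_mul_of_nonneg_left hXrM hM0.le
      _ = r := by field_simp
  have hdiff' : ∀ t ∈ Set.Icc (0:ℝ) T, ‖φ t X - ψ t X‖ ≤ |ctilde| * T * ‖X‖ ^ 2 := by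
    intro t ht
    refine (hdiff t ht X).trans ?_
    have : ctilde * t ≤ |ctilde| * T := by
      calc ctilde * t ≤ |ctilde| * t := mul_le_mul_of_nonneg_right (le_abs_self _) ht.1
        _ ≤ |ctilde| * T := mul_le_mul_of_nonneg_left ht.2 (abs_nonneg _)
    exact mul_le_mul_of_nonneg_right this (by positivity)
  have hψM : ∀ t ∈ Set.Icc (0:ℝ) T, ‖ψ t X‖ ≤ (M + |ctilde| * T) * ‖X‖ := by
    intro t ht
    have hkey : ‖ψ t X‖ ≤ ‖φ t X‖ + ‖φ t X - ψ t X‖ := by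
      have := norm_sub_le (φ t X) (φ t X - ψ t X)
      rwa [sub_sub_cancel] at this
    calc ‖ψ t X‖ ≤ ‖φ t X‖ + ‖φ t X - ψ t X‖ := hkey
      _ ≤ M * ‖X‖ + |ctilde| * T * ‖X‖ ^ 2 := add_le_add (hφM t ht) (hdiff' t ht)
      _ ≤ M * ‖X‖ + |ctilde| * T * ‖X‖ := by
          have h2 : ‖X‖ ^ 2 ≤ ‖X‖ := by nlinarith [norm_nonneg X]
          have ha : 0 ≤ |ctilde| * T := by positivity
          nlinarith [mul_le_mul_of_nonneg_left h2 ha]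
      _ = (M + |ctilde| * T) * ‖X‖ := by ring
  -- pointwise bound
  have hpt : ∀ t ∈ Set.Icc (0:ℝ) T, |Rp (φ t X) - Rq (ψ t X)| ≤ D * ‖X‖ ^ 3 := by
    intro t ht
    have hA : |Rp (φ t X) - Rq (φ t X)| ≤ |C₁| * M ^ 3 * ‖X‖ ^ 3 := by
      refine (htaylor _ (hφr t ht)).trans ?_
      have h1 : C₁ * ‖φ t X‖ ^ 3 ≤ |C₁| * ‖φ t X‖ ^ 3 :=
        mul_le_mul_of_nonneg_right (le_abs_self _) (by positivity)
      have h2 : ‖φ t X‖ ^ 3 ≤ (M * ‖X‖) ^ 3 :=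
        pow_le_pow_left₀ (norm_nonneg _) (hφM t ht) 3
      calc C₁ * ‖φ t X‖ ^ 3 ≤ |C₁| * ‖φ t X‖ ^ 3 := h1
        _ ≤ |C₁| * (M * ‖X‖) ^ 3 := mul_le_mul_of_nonneg_left h2 (abs_nonneg _)
        _ = |C₁| * M ^ 3 * ‖X‖ ^ 3 := by ring
    have hB : |Rq (φ t X) - Rq (ψ t X)| ≤
        |C₂| * (2 * M + |ctilde| * T) * (|ctilde| * T) * ‖X‖ ^ 3 := by
      refine (hlip _ _).trans ?_
      have hsum : ‖φ t X‖ + ‖ψ t X‖ ≤ (2 * M + |ctilde| * T) * ‖X‖ := by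
        have := add_le_add (hφM t ht) (hψM t ht)
        nlinarith [this]
      have h1 : C₂ * (‖φ t X‖ + ‖ψ t X‖) * ‖φ t X - ψ t X‖
          ≤ |C₂| * (‖φ t X‖ + ‖ψ t X‖) * ‖φ t X - ψ t X‖ := by
        have : 0 ≤ (‖φ t X‖ + ‖ψ t X‖) * ‖φ t X - ψ t X‖ := by positivity
        nlinarith [le_abs_self C₂]
      refine h1.trans ?_
      calc |C₂| * (‖φ t X‖ + ‖ψ t X‖) * ‖φ t X - ψ t X‖
          ≤ |C₂| * ((2 * M + |ctilde| * T) * ‖X‖) * (|ctilde| * T * ‖X‖ ^ 2) := by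
            apply mul_le_mul
            · exact mul_le_mul_of_nonneg_left hsum (abs_nonneg _)
            · exact hdiff' t ht
            · exact norm_nonneg _
            · positivity
        _ = |C₂| * (2 * M + |ctilde| * T) * (|ctilde| * T) * ‖X‖ ^ 3 := by ring
    calc |Rp (φ t X) - Rq (ψ t X)|
        ≤ |Rp (φ t X) - Rq (φ t X)| + |Rq (φ t X) - Rq (ψ t X)| := by
          have := abs_sub_le (Rp (φ t X)) (Rq (φ t X)) (Rq (ψ t X))
          linarith
      _ ≤ |C₁| * M ^ 3 * ‖X‖ ^ 3
          + |C₂| * (2 * M + |ctilde| * T) * (|ctilde| * T) * ‖X‖ ^ 3 :=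
          add_le_add hA hB
      _ = D * ‖X‖ ^ 3 := by rw [hD]; ring
  -- integrability
  have hInt1 : IntervalIntegrable (fun t => Rp (φ t X)) volume 0 T := by
    apply ContinuousOn.intervalIntegrable
    rw [Set.uIcc_of_le hT.le]
    exact hRpcont.comp_continuousOn (hφcont X)
  have hInt2 : IntervalIntegrable (fun t => Rq (ψ t X)) volume 0 T := by
    apply ContinuousOn.intervalIntegrable
    rw [Set.uIcc_of_le hT.le]
    exact hRqcont.comp_continuousOn (hψcont X)
  have hint : |(∫ t in (0:ℝ)..T, Rp (φ t X)) - ∫ t in (0:ℝ)..T, Rq (ψ t X)|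
      ≤ D * ‖X‖ ^ 3 * T := by
    rw [← intervalIntegral.integral_sub hInt1 hInt2]
    have := intervalIntegral.norm_integral_le_of_norm_le_const
      (a := (0:ℝ)) (b := T) (C := D * ‖X‖ ^ 3)
      (f := fun t => Rp (φ t X) - Rq (ψ t X)) (fun t ht => by
        have ht' : t ∈ Set.Icc (0:ℝ) T := by
          rw [Set.uIoc_of_le hT.le] at ht
          exact ⟨ht.1.le, ht.2⟩
        simpa [Real.norm_eq_abs] using hpt t ht')
    simpa [Real.norm_eq_abs, abs_of_pos hT] using this
  have hT' : (0:ℝ) < 1 / T := by positivity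
  calc |(1 / T) * (∫ t in (0:ℝ)..T, Rp (φ t X)) - (1 / T) * ∫ t in (0:ℝ)..T, Rq (ψ t X)|
      = (1 / T) * |(∫ t in (0:ℝ)..T, Rp (φ t X)) - ∫ t in (0:ℝ)..T, Rq (ψ t X)| := by
        rw [← mul_sub, abs_mul, abs_of_pos hT']
    _ ≤ (1 / T) * (D * ‖X‖ ^ 3 * T) := mul_le_mul_of_nonneg_left hint hT'.le
    _ = D * ‖X‖ ^ 3 := by field_simp
    _ ≤ (D + 1) * ‖X‖ ^ 3 := by nlinarith [norm_nonneg X, pow_nonneg (norm_nonneg X) 3]
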